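/- Let S be an Artinian local ring which is injective as a module over itself. Then for every ideal J of S one has Ann_S(Ann_S(J)) = J. -/
import Mathlib

/-- Let `S` be an Artinian local ring which is injective as a module over itself.
Then for every ideal `J` of `S` one has `Ann_S(Ann_S(J)) = J`. -/
theorem stmt9 (S : Type*) [CommRing S] [IsArtinianRing S] [IsLocalRing S]
    [Module.Injective S S] (J : Ideal S) :
    (Submodule.annihilator J).annihilator = J := by
  refine le_antisymm ?_ ?_
  · -- hard direction
    intro x hx
    set I : Ideal S := J.colon (Ideal.span {x}) with hI
    -- Step A : annihilator of I is ⊥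
    have hAnn : I.annihilator = ⊥ := by
      rw [eq_bot_iff]
      intro a ha
      -- f : S⧸I → S, mk s ↦ s • a
      have hf : I ≤ LinearMap.ker (LinearMap.toSpanSingleton S S a) := by
        intro s hs
        simp only [LinearMap.mem_ker, LinearMap.toSpanSingleton_apply]
        have := Submodule.mem_annihilator.mp ha s hs
        simpa [smul_eq_mul, mul_comm] using this
      set f : (S ⧸ I) →ₗ[S] S := Submodule.liftQ I (LinearMap.toSpanSingleton S S a) hf
        with hfdef
      -- i : S⧸I → S⧸J, mk s ↦ mk (s • x)
      have hi : I ≤ LinearMap.ker (J.mkQ.comp (LinearMap.toSpanSingleton S S x)) := by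
        intro s hs
        simp only [LinearMap.mem_ker, LinearMap.comp_apply,
          LinearMap.toSpanSingleton_apply, Submodule.mkQ_apply,
          Submodule.Quotient.mk_eq_zero]
        exact Submodule.mem_colon.mp hs x (Ideal.mem_span_singleton_self x)
      set i : (S ⧸ I) →ₗ[S] (S ⧸ J) :=
        Submodule.liftQ I (J.mkQ.comp (LinearMap.toSpanSingleton S S x)) hi with hidef
      have hinj : Function.Injective i := by
        rw [← LinearMap.ker_eq_bot, hidef]
        refine Submodule.ker_liftQ_eq_bot _ _ _ ?_
        intro s hs
        simp only [LinearMap.mem_ker, LinearMap.comp_apply,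
          LinearMap.toSpanSingleton_apply, Submodule.mkQ_apply,
          Submodule.Quotient.mk_eq_zero] at hs
        refine Submodule.mem_colon.mpr fun p hp => ?_
        obtain ⟨c, rfl⟩ := Ideal.mem_span_singleton'.mp hp
        have heq : s • (c * x) = c • (s • x) := by
          simp only [smul_eq_mul]; ring
        rw [heq]
        exact Submodule.smul_mem _ _ hs
      obtain ⟨g, hg⟩ := Module.Injective.out i hinj f
      set b : S := g (Submodule.Quotient.mk 1) with hb
      have hbJ : b ∈ J.annihilator := by
        refine Submodule.mem_annihilator.mpr fun j hj => ?_
        have h1 : (j : S) • (Submodule.Quotient.mk (1 : S) : S ⧸ J) = 0 := by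
          rw [← Submodule.Quotient.mk_smul, Submodule.Quotient.mk_eq_zero]
          simpa [smul_eq_mul] using hj
        have : b • j = j • b := by rw [smul_eq_mul, smul_eq_mul, mul_comm]
        rw [this, hb, ← map_smul, h1, map_zero]
      have hax : a = x • b := by
        have h1 : f (Submodule.Quotient.mk 1) = a := by
          rw [hfdef, Submodule.liftQ_apply, LinearMap.toSpanSingleton_apply, one_smul]
        have h2 : i (Submodule.Quotient.mk 1) = Submodule.Quotient.mk x := by
          rw [hidef, Submodule.liftQ_apply, LinearMap.comp_apply,
            LinearMap.toSpanSingleton_apply, one_smul, Submodule.mkQ_apply]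
        have h3 : (Submodule.Quotient.mk x : S ⧸ J) =
            x • (Submodule.Quotient.mk 1 : S ⧸ J) := by
          rw [← Submodule.Quotient.mk_smul]; simp
        have := hg (Submodule.Quotient.mk 1)
        rw [h2, h3, map_smul] at this
        rw [← h1, ← this]
      have : x • b = 0 := Submodule.mem_annihilator.mp hx b hbJ
      simpa [hax] using this
    -- Step B : I = ⊤
    have hItop : I = ⊤ := by
      by_contra hne
      have hle : I ≤ IsLocalRing.maximalIdeal S := IsLocalRing.le_maximalIdeal hne
      obtain ⟨n, hn⟩ := IsArtinianRing.isNilpotent_jacobson_bot (R := S)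
      rw [IsLocalRing.jacobson_eq_maximalIdeal ⊥ bot_ne_top] at hn
      -- find minimal n with m^n = ⊥
      have hex : ∃ n, (IsLocalRing.maximalIdeal S) ^ n = ⊥ := ⟨n, hn⟩
      classical
      let m := Nat.find hex
      have hm : (IsLocalRing.maximalIdeal S) ^ m = ⊥ := Nat.find_spec hex
      have hmpos : 0 < m := by
        rcases Nat.eq_zero_or_pos m with h0 | h
        · exfalso
          have := hm
          rw [h0, pow_zero, Ideal.one_eq_top] at this
          exact top_ne_bot this
        · exact h
      have hprev : (IsLocalRing.maximalIdeal S) ^ (m - 1) ≠ ⊥ :=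
        Nat.find_min hex (by omega)
      obtain ⟨c, hc, hc0⟩ := Submodule.exists_mem_ne_zero_of_ne_bot hprev
      have : c ∈ I.annihilator := by
        refine Submodule.mem_annihilator.mpr fun s hs => ?_
        have : c * s ∈ (IsLocalRing.maximalIdeal S) ^ (m - 1) *
            (IsLocalRing.maximalIdeal S) := Ideal.mul_mem_mul hc (hle hs)
        rw [← pow_succ, Nat.sub_add_cancel hmpos, hm] at this
        simpa [smul_eq_mul] using this
      rw [hAnn] at this
      exact hc0 this
    have : (1 : S) ∈ I := hItop ▸ Submodule.mem_top
    have := Submodule.mem_colon.mp this x (Ideal.mem_span_singleton_self x)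
    simpa using this
  · -- easy direction
    intro j hj
    refine Submodule.mem_annihilator.mpr fun a ha => ?_
    have := Submodule.mem_annihilator.mp ha j hj
    simpa [smul_eq_mul, mul_comm] using this
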